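/- Suppose X and Y are real random variables such that for some integer K, F_Y(x − K) ≤ F_X(x) ≤ F_Y(x + K) for all x, where Y has a continuous distribution function. Then there is a coupling (X', Y') with X' ~ X, Y' ~ Y and |X' − Y'| ≤ K + 1 almost surely. -/
import Mathlib

open MeasureTheory

open ProbabilityTheory Set Filter Topology in
private lemma quantile_galois (μ : Measure ℝ) [IsProbabilityMeasure μ] {p : ℝ}
    (hp : p ∈ Set.Ioo (0:ℝ) 1) (y : ℝ) :
    sInf {x : ℝ | p ≤ cdf μ x} ≤ y ↔ p ≤ cdf μ y := by
  set S : Set ℝ := {x : ℝ | p ≤ cdf μ x} with hS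
  have hne : S.Nonempty := by
    obtain ⟨x, hx⟩ := ((tendsto_cdf_atTop μ).eventually (eventually_ge_nhds hp.2)).exists
    exact ⟨x, hx⟩
  obtain ⟨y0, hy0⟩ := ((tendsto_cdf_atBot μ).eventually (eventually_lt_nhds hp.1)).exists
  have hbdd : BddBelow S := by
    refine ⟨y0, fun z hz => ?_⟩
    by_contra h
    push_neg at h
    exact absurd (hz.trans (monotone_cdf μ h.le)) (not_le.2 hy0)
  have hmem : p ≤ cdf μ (sInf S) := by
    have ht : Tendsto (cdf μ) (𝓝[>] (sInf S)) (𝓝 (cdf μ (sInf S))) :=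
      ((cdf μ).right_continuous (sInf S)).mono_of_mem_nhdsWithin (nhdsWithin_mono _ Ioi_subset_Ici_self
        self_mem_nhdsWithin) |>.tendsto
    refine ge_of_tendsto ht ?_
    filter_upwards [self_mem_nhdsWithin] with z hz
    obtain ⟨s, hsS, hsz⟩ := exists_lt_of_csInf_lt hne hz
    exact hsS.trans (monotone_cdf μ hsz.le)
  constructor
  · intro h
    exact hmem.trans (monotone_cdf μ h)
  · intro h
    exact csInf_le hbdd h

/-- If the cdfs of laws `μ` (of `X`) and `ν` (of `Y`) satisfy
`F_ν(x − K) ≤ F_μ(x) ≤ F_ν(x + K)` for all `x`, where `ν` is atomless (continuous cdf),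
then there is a coupling `(X', Y')` with `X' ~ μ`, `Y' ~ ν` and `|X' − Y'| ≤ K + 1` a.s. -/
theorem monotone_coupling_of_cdf_sandwich
    (μ ν : Measure ℝ) [IsProbabilityMeasure μ] [IsProbabilityMeasure ν]
    (K : ℤ) (hcont : ∀ x : ℝ, ν {x} = 0)
    (hsandwich : ∀ x : ℝ,
      ν (Set.Iic (x - K)) ≤ μ (Set.Iic x) ∧ μ (Set.Iic x) ≤ ν (Set.Iic (x + K))) :
    ∃ (Ω : Type) (m0 : MeasurableSpace Ω) (P : Measure Ω) (_ : IsProbabilityMeasure P)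
      (X' Y' : Ω → ℝ),
      Measurable X' ∧ Measurable Y' ∧
      P.map X' = μ ∧ P.map Y' = ν ∧
      ∀ᵐ ω ∂P, |X' ω - Y' ω| ≤ (K : ℝ) + 1 := by
  classical
  open ProbabilityTheory Set in
  -- quantile functions, set to 0 outside (0,1)
  set G : Measure ℝ → ℝ → ℝ :=
    fun m p => if p ∈ Set.Ioo (0:ℝ) 1 then sInf {x : ℝ | p ≤ cdf m x} else 0 with hG
  have hGmeas : ∀ (m : Measure ℝ) [IsProbabilityMeasure m], Measurable (G m) := by
    intro m _
    refine measurable_of_Iic (fun x => ?_)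
    have : G m ⁻¹' Set.Iic x =
        (Set.Ioo (0:ℝ) 1 ∩ Set.Iic (cdf m x)) ∪ ((Set.Ioo (0:ℝ) 1)ᶜ ∩ {p | (0:ℝ) ≤ x}) := by
      ext p
      by_cases hp : p ∈ Set.Ioo (0:ℝ) 1
      · simp only [Set.mem_preimage, Set.mem_Iic, hG, if_pos hp, Set.mem_union, Set.mem_inter_iff,
          hp, true_and, Set.mem_compl_iff, not_true, false_and, or_false]
        exact quantile_galois m hp x
      · simp only [Set.mem_preimage, Set.mem_Iic, hG, if_neg hp, Set.mem_union, Set.mem_inter_iff,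
          hp, false_and, Set.mem_compl_iff, not_false_iff, true_and, false_or, Set.mem_setOf_eq,
          if_false]
    rw [this]
    exact ((measurableSet_Ioo.inter measurableSet_Iic).union
      (measurableSet_Ioo.compl.inter (by by_cases h : (0:ℝ) ≤ x <;> simp [h])))
  set P : Measure ℝ := volume.restrict (Set.Ioo (0:ℝ) 1) with hP
  have hPprob : IsProbabilityMeasure P := by
    constructor
    rw [hP, Measure.restrict_apply MeasurableSet.univ, Set.univ_inter, Real.volume_Ioo]
    norm_num
  have hmap : ∀ (m : Measure ℝ) [IsProbabilityMeasure m], P.map (G m) = m := by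
    intro m _
    have hGm := hGmeas m
    have : IsProbabilityMeasure (P.map (G m)) := Measure.isProbabilityMeasure_map hGm.aemeasurable
    refine Measure.ext_of_Iic (P.map (G m)) m (fun x => ?_)
    rw [Measure.map_apply hGm measurableSet_Iic]
    have hpre : Set.Ioo (0:ℝ) 1 ∩ G m ⁻¹' Set.Iic x = Set.Ioo (0:ℝ) 1 ∩ Set.Iic (cdf m x) := by
      ext p
      simp only [Set.mem_inter_iff, Set.mem_preimage, Set.mem_Iic, and_congr_right_iff]
      intro hp
      rw [hG]; simp only [if_pos hp]
      exact quantile_galois m hp x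
    rw [hP, Measure.restrict_apply (hGm measurableSet_Iic), Set.inter_comm, hpre]
    have h01 : (0:ℝ) ≤ cdf m x := cdf_nonneg m x
    have h1 : cdf m x ≤ 1 := cdf_le_one m x
    rcases eq_or_lt_of_le h1 with h | h
    · have heq : Set.Ioo (0:ℝ) 1 ∩ Set.Iic (cdf m x) = Set.Ioo 0 1 :=
        Set.inter_eq_left.mpr (fun p hp => h ▸ Set.mem_Iic.mpr hp.2.le)
      rw [heq, Real.volume_Ioo, ← ofReal_cdf, h]
      norm_num
    · have heq : Set.Ioo (0:ℝ) 1 ∩ Set.Iic (cdf m x) = Set.Ioc 0 (cdf m x) := by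
        ext p
        simp only [Set.mem_inter_iff, Set.mem_Ioo, Set.mem_Iic, Set.mem_Ioc]
        exact ⟨fun hp => ⟨hp.1.1, hp.2⟩, fun hp => ⟨⟨hp.1, lt_of_le_of_lt hp.2 h⟩, hp.2⟩⟩
      rw [heq, Real.volume_Ioc, sub_zero, ofReal_cdf]
  refine ⟨ℝ, inferInstance, P, hPprob, G μ, G ν, hGmeas μ, hGmeas ν, hmap μ, hmap ν, ?_⟩
  filter_upwards [ae_restrict_mem measurableSet_Ioo] with p hp
  simp only [hG, if_pos hp]
  set a := sInf {x : ℝ | p ≤ cdf μ x} with ha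
  set b := sInf {x : ℝ | p ≤ cdf ν x} with hb
  have hcdf_le : ∀ (x : ℝ), cdf ν (x - K) ≤ cdf μ x := by
    intro x
    have := (hsandwich x).1
    rw [← ofReal_cdf, ← ofReal_cdf] at this
    exact (ENNReal.ofReal_le_ofReal_iff (cdf_nonneg μ x)).mp this
  have hcdf_ge : ∀ (x : ℝ), cdf μ x ≤ cdf ν (x + K) := by
    intro x
    have := (hsandwich x).2
    rw [← ofReal_cdf, ← ofReal_cdf] at this
    exact (ENNReal.ofReal_le_ofReal_iff (cdf_nonneg ν _)).mp this
  have hpa : p ≤ cdf μ a := (quantile_galois μ hp a).mp le_rfl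
  have hpb : p ≤ cdf ν b := (quantile_galois ν hp b).mp le_rfl
  have h1 : a ≤ b + K := by
    refine (quantile_galois μ hp (b + K)).mpr ?_
    have := hcdf_le (b + K)
    rw [add_sub_cancel_right] at this
    exact hpb.trans this
  have h2 : b ≤ a + K := (quantile_galois ν hp (a + K)).mpr (hpa.trans (hcdf_ge a))
  rw [abs_le]
  constructor <;> linarith
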